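/- Let G be a finite simple graph, d ≥ 1 an integer, (A, B) a d-cut of G, and v a vertex with |N(v)| ≥ d+1. Suppose that for every set T ⊆ N(v) with |T| = d+1 there are at least 2d+1 vertices w ≠ v with T ⊆ N(w). Then either N(v) ∪ {v} ⊆ A or N(v) ∪ {v} ⊆ B. -/
import Mathlib


variable {V : Type*}

/-- A `d`-cut of a simple graph `G`: a partition `(A, B)` of the vertex set into two
nonempty parts such that every vertex of `A` has at most `d` neighbors in `B` and
every vertex of `B` has at most `d` neighbors in `A`. -/
def IsDCut (G : SimpleGraph V) (d : ℕ) (A B : Set V) : Prop :=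
  A.Nonempty ∧ B.Nonempty ∧ Disjoint A B ∧ A ∪ B = Set.univ ∧
    (∀ v ∈ A, (G.neighborSet v ∩ B).ncard ≤ d) ∧
    (∀ v ∈ B, (G.neighborSet v ∩ A).ncard ≤ d)

/-- A vertex set `T` is monochromatic if every `d`-cut of `G` has `T` entirely on one side. -/
def Monochromatic (G : SimpleGraph V) (d : ℕ) (T : Set V) : Prop :=
  ∀ A B : Set V, IsDCut G d A B → T ⊆ A ∨ T ⊆ B

/-- The edge cut of a cut `(A, B)`: the set of edges of `G` with one endpoint in `A`
and the other endpoint in `B`. -/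
def edgeCut (G : SimpleGraph V) (A B : Set V) : Set (Sym2 V) :=
  {e | e ∈ G.edgeSet ∧ ∃ u v, e = s(u, v) ∧ u ∈ A ∧ v ∈ B}

/-- A minimal `d`-cut: no `d`-cut has an edge cut that is a proper subset of its edge cut. -/
def IsMinimalDCut (G : SimpleGraph V) (d : ℕ) (A B : Set V) : Prop :=
  IsDCut G d A B ∧ ∀ A' B' : Set V, IsDCut G d A' B' → ¬ edgeCut G A' B' ⊂ edgeCut G A B

/-- A maximal `d`-cut: no `d`-cut has an edge cut that properly contains its edge cut. -/
def IsMaximalDCut (G : SimpleGraph V) (d : ℕ) (A B : Set V) : Prop :=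
  IsDCut G d A B ∧ ∀ A' B' : Set V, IsDCut G d A' B' → ¬ edgeCut G A B ⊂ edgeCut G A' B'

/-- Let `(A, B)` be a `d`-cut and `v` a vertex with at least `d+1` neighbors. If for
every `(d+1)`-subset `T` of `N(v)` there are at least `2d+1` vertices `w ≠ v` whose
neighborhood contains `T`, then `N(v) ∪ {v}` lies entirely in `A` or entirely in `B`. -/
lemma aux_one_side [Fintype V] (G : SimpleGraph V) (d : ℕ) (hd : 1 ≤ d) (A B : Set V)
    (hcov : A ∪ B = Set.univ)
    (hA : ∀ v ∈ A, (G.neighborSet v ∩ B).ncard ≤ d)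
    (hB : ∀ v ∈ B, (G.neighborSet v ∩ A).ncard ≤ d)
    (v : V) (hv : v ∈ A)
    (hdeg : d + 1 ≤ (G.neighborSet v).ncard)
    (hT : ∀ T : Set V, T ⊆ G.neighborSet v → T.ncard = d + 1 →
      2 * d + 1 ≤ {w | w ≠ v ∧ T ⊆ G.neighborSet w}.ncard) :
    G.neighborSet v ∪ {v} ⊆ A := by
  suffices h : G.neighborSet v ⊆ A by
    intro x hx
    rcases hx with hx | hx
    · exact h hx
    · rcases hx with rfl; exact hv
  by_contra hcon
  obtain ⟨b, hbN, hbA⟩ : ∃ b ∈ G.neighborSet v, b ∉ A := by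
    simpa [Set.subset_def] using hcon
  have hbB : b ∈ B := by
    have : b ∈ A ∪ B := hcov ▸ Set.mem_univ b
    rcases this with h | h
    · exact absurd h hbA
    · exact h
  have hNA : (G.neighborSet v ∩ A).Nonempty := by
    rw [Set.nonempty_iff_ne_empty]
    intro hemp
    have hsub : G.neighborSet v ⊆ B := by
      intro x hx
      have hx2 : x ∈ A ∪ B := hcov ▸ Set.mem_univ x
      rcases hx2 with hx2 | hx2
      · exact absurd (Set.eq_empty_iff_forall_notMem.mp hemp x ⟨hx, hx2⟩) (fun h => h)
      · exact hx2
    have : (G.neighborSet v).ncard ≤ d := by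
      have := hA v hv
      rwa [Set.inter_eq_left.mpr hsub] at this
    omega
  obtain ⟨a, haN, haA⟩ := hNA
  have hab : ({a, b} : Set V) ⊆ G.neighborSet v := by
    intro x hx; rcases hx with rfl | rfl <;> assumption
  have hcard2 : ({a, b} : Set V).ncard ≤ d + 1 := by
    have := Set.ncard_insert_le a ({b} : Set V)
    simp only [Set.ncard_singleton] at this
    omega
  obtain ⟨T, hsubT, hTN, hTcard⟩ := Set.exists_subsuperset_card_eq hab hcard2 hdeg
  have haT : a ∈ T := hsubT (by simp)
  have hbT : b ∈ T := hsubT (by simp)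
  have hWsub : {w | w ≠ v ∧ T ⊆ G.neighborSet w} ⊆
      (G.neighborSet b ∩ A) ∪ (G.neighborSet a ∩ B) := by
    rintro w ⟨hwv, hwT⟩
    have hw2 : w ∈ A ∪ B := hcov ▸ Set.mem_univ w
    rcases hw2 with hw | hw
    · left
      exact ⟨(G.adj_symm (hwT hbT)), hw⟩
    · right
      exact ⟨(G.adj_symm (hwT haT)), hw⟩
  have hle : {w | w ≠ v ∧ T ⊆ G.neighborSet w}.ncard ≤
      (G.neighborSet b ∩ A).ncard + (G.neighborSet a ∩ B).ncard := by
    refine le_trans (Set.ncard_le_ncard hWsub (Set.toFinite _)) (Set.ncard_union_le _ _)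
  have h1 := hB b hbB
  have h2 := hA a haA
  have h3 := hT T hTN hTcard
  omega

theorem closed_neighborhood_one_side [Fintype V] (G : SimpleGraph V) (d : ℕ)
    (hd : 1 ≤ d) (A B : Set V) (hAB : IsDCut G d A B) (v : V)
    (hdeg : d + 1 ≤ (G.neighborSet v).ncard)
    (hT : ∀ T : Set V, T ⊆ G.neighborSet v → T.ncard = d + 1 →
      2 * d + 1 ≤ {w | w ≠ v ∧ T ⊆ G.neighborSet w}.ncard) :
    G.neighborSet v ∪ {v} ⊆ A ∨ G.neighborSet v ∪ {v} ⊆ B := by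
  obtain ⟨-, -, -, hcov, hA, hB⟩ := hAB
  have hv : v ∈ A ∪ B := hcov ▸ Set.mem_univ v
  rcases hv with hv | hv
  · exact Or.inl (aux_one_side G d hd A B hcov hA hB v hv hdeg hT)
  · exact Or.inr (aux_one_side G d hd B A (by rw [Set.union_comm]; exact hcov) hB hA v hv hdeg hT)
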